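/- Let (e_0, e_1) be the standard basis of ℂ² and let ψ' = (1/√2)( e_1 ⊗ e_1 ⊗ e_1 ⊗ e_1 + e_0 ⊗ e_1 ⊗ e_1 ⊗ e_0 ), a unit vector in (ℂ²)^{⊗4}. Then the reduced density matrix of |ψ'⟩⟨ψ'| on the tensor factors (1,4) is the rank-one projection onto (1/√2)(e_0 ⊗ e_0 + e_1 ⊗ e_1), and the reduced density matrix on the factors (1,2) equals ½( |e_1⊗e_1⟩⟨e_1⊗e_1| + |e_0⊗e_1⟩⟨e_0⊗e_1| ), whose von Neumann entropy is log 2. -/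

import Mathlib

open scoped BigOperators ComplexOrder

/-- Von Neumann entropy of a (Hermitian) matrix: `-∑ λᵢ log λᵢ` over the eigenvalues,
with the convention that it is `0` for non-Hermitian matrices. -/
noncomputable def vNEntropy {n : Type*} [Fintype n] [DecidableEq n] (ρ : Matrix n n ℂ) : ℝ :=
  if h : ρ.IsHermitian then -∑ i, h.eigenvalues i * Real.log (h.eigenvalues i) else 0

/-- A density matrix: positive semidefinite with trace 1. -/
noncomputable def IsDensityMatrix {n : Type*} [Fintype n] [DecidableEq n] (ρ : Matrix n n ℂ) : Prop :=
  ρ.PosSemidef ∧ ρ.trace = 1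

/-- The pure density matrix `|ψ⟩⟨ψ|` associated to a vector `ψ`. -/
noncomputable def pureState {n : Type*} (ψ : n → ℂ) : Matrix n n ℂ :=
  Matrix.of fun p q => ψ p * star (ψ q)

variable {d₁ d₂ d₃ d₄ : ℕ}

/-- Reduced density matrix on factor 1 (partial trace over factors 2,3,4). -/
noncomputable def pt1 (ρ : Matrix (Fin d₁ × Fin d₂ × Fin d₃ × Fin d₄) (Fin d₁ × Fin d₂ × Fin d₃ × Fin d₄) ℂ) :
    Matrix (Fin d₁) (Fin d₁) ℂ :=
  Matrix.of fun i i' =>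
    ∑ b : Fin d₂, ∑ c : Fin d₃, ∑ k : Fin d₄, ρ (i, b, c, k) (i', b, c, k)

/-- Reduced density matrix on factor 3 (partial trace over factors 1,2,4). -/
noncomputable def pt3 (ρ : Matrix (Fin d₁ × Fin d₂ × Fin d₃ × Fin d₄) (Fin d₁ × Fin d₂ × Fin d₃ × Fin d₄) ℂ) :
    Matrix (Fin d₃) (Fin d₃) ℂ :=
  Matrix.of fun c c' =>
    ∑ i : Fin d₁, ∑ b : Fin d₂, ∑ k : Fin d₄, ρ (i, b, c, k) (i, b, c', k)

/-- Reduced density matrix on factor 4 (partial trace over factors 1,2,3). -/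
noncomputable def pt4 (ρ : Matrix (Fin d₁ × Fin d₂ × Fin d₃ × Fin d₄) (Fin d₁ × Fin d₂ × Fin d₃ × Fin d₄) ℂ) :
    Matrix (Fin d₄) (Fin d₄) ℂ :=
  Matrix.of fun k k' =>
    ∑ i : Fin d₁, ∑ b : Fin d₂, ∑ c : Fin d₃, ρ (i, b, c, k) (i, b, c, k')

/-- Reduced density matrix on factors (1,2) (partial trace over factors 3,4). -/
noncomputable def pt12 (ρ : Matrix (Fin d₁ × Fin d₂ × Fin d₃ × Fin d₄) (Fin d₁ × Fin d₂ × Fin d₃ × Fin d₄) ℂ) :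
    Matrix (Fin d₁ × Fin d₂) (Fin d₁ × Fin d₂) ℂ :=
  Matrix.of fun p q =>
    ∑ c : Fin d₃, ∑ k : Fin d₄, ρ (p.1, p.2, c, k) (q.1, q.2, c, k)

/-- Reduced density matrix on factors (1,4) (partial trace over factors 2,3). -/
noncomputable def pt14 (ρ : Matrix (Fin d₁ × Fin d₂ × Fin d₃ × Fin d₄) (Fin d₁ × Fin d₂ × Fin d₃ × Fin d₄) ℂ) :
    Matrix (Fin d₁ × Fin d₄) (Fin d₁ × Fin d₄) ℂ :=
  Matrix.of fun p q =>
    ∑ b : Fin d₂, ∑ c : Fin d₃, ρ (p.1, b, c, p.2) (q.1, b, c, q.2)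

/-- Reduced density matrix on factors (3,4) (partial trace over factors 1,2). -/
noncomputable def pt34 (ρ : Matrix (Fin d₁ × Fin d₂ × Fin d₃ × Fin d₄) (Fin d₁ × Fin d₂ × Fin d₃ × Fin d₄) ℂ) :
    Matrix (Fin d₃ × Fin d₄) (Fin d₃ × Fin d₄) ℂ :=
  Matrix.of fun p q =>
    ∑ i : Fin d₁, ∑ b : Fin d₂, ρ (i, b, p.1, p.2) (i, b, q.1, q.2)

/-- The standard basis vectors of `ℂ²`: `stdBasis a i = δ_{i a}`. -/
noncomputable def stdBasis (a : Fin 2) : Fin 2 → ℂ := fun i => if i = a then 1 else 0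

/-- The vector `ψ' = (1/√2)(e₁⊗e₁⊗e₁⊗e₁ + e₀⊗e₁⊗e₁⊗e₀)` in `(ℂ²)^{⊗4}`. -/
noncomputable def ψAlt : Fin 2 × Fin 2 × Fin 2 × Fin 2 → ℂ := fun p =>
  (1 / (Real.sqrt 2 : ℝ) : ℂ) *
    (stdBasis 1 p.1 * stdBasis 1 p.2.1 * stdBasis 1 p.2.2.1 * stdBasis 1 p.2.2.2 +
     stdBasis 0 p.1 * stdBasis 1 p.2.1 * stdBasis 1 p.2.2.1 * stdBasis 0 p.2.2.2)

/-- The maximally entangled unit vector `(1/√2)(e₀ ⊗ e₀ + e₁ ⊗ e₁)` in `ℂ² ⊗ ℂ²`. -/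
noncomputable def bellVec : Fin 2 × Fin 2 → ℂ := fun p =>
  (1 / (Real.sqrt 2 : ℝ) : ℂ) * (stdBasis 0 p.1 * stdBasis 0 p.2 + stdBasis 1 p.1 * stdBasis 1 p.2)

/-- The vector `e₁ ⊗ e₁` in `ℂ² ⊗ ℂ²`. -/
noncomputable def e11 : Fin 2 × Fin 2 → ℂ := fun p => stdBasis 1 p.1 * stdBasis 1 p.2

/-- The vector `e₀ ⊗ e₁` in `ℂ² ⊗ ℂ²`. -/
noncomputable def e01 : Fin 2 × Fin 2 → ℂ := fun p => stdBasis 0 p.1 * stdBasis 1 p.2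

open Matrix in
private lemma trace_eq_sum_eig' {n : Type*} [Fintype n] [DecidableEq n] {ρ : Matrix n n ℂ}
    (h : ρ.IsHermitian) : ρ.trace = ∑ i, (h.eigenvalues i : ℂ) := by
  conv_lhs => rw [h.spectral_theorem]
  rw [Unitary.conjStarAlgAut_apply]
  rw [Matrix.trace_mul_cycle]
  rw [(Matrix.mem_unitaryGroup_iff').mp (Matrix.IsHermitian.eigenvectorUnitary h).2]
  simp [Matrix.trace_diagonal]

open Matrix in
private lemma entropy_aux' {n : Type*} [Fintype n] [DecidableEq n] {ρ : Matrix n n ℂ}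
    (h : ρ.IsHermitian) (hsq : ρ * ρ = (1/2 : ℂ) • ρ) (htr : ρ.trace = 1) :
    vNEntropy ρ = Real.log 2 := by
  have key : ∀ i, h.eigenvalues i = 0 ∨ h.eigenvalues i = 1/2 := by
    intro i
    have hv := h.mulVec_eigenvectorBasis i
    have hvne : (⇑(h.eigenvectorBasis i) : n → ℂ) ≠ 0 := by
      have := h.eigenvectorBasis.orthonormal.ne_zero i
      intro hc; apply this; ext j; exact congrFun hc j
    obtain ⟨j, hj⟩ := Function.ne_iff.mp hvne
    have hj' : (⇑(h.eigenvectorBasis i) : n → ℂ) j ≠ 0 := by simpa using hj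
    have e1 : (ρ * ρ) *ᵥ ⇑(h.eigenvectorBasis i) = ((1/2 : ℂ) • ρ) *ᵥ ⇑(h.eigenvectorBasis i) := by
      rw [hsq]
    rw [← Matrix.mulVec_mulVec, hv, Matrix.mulVec_smul, hv, Matrix.smul_mulVec, hv] at e1
    have e2 := congrFun e1 j
    simp only [Pi.smul_apply, smul_smul, Complex.real_smul, smul_eq_mul] at e2
    have e3 : (((h.eigenvalues i : ℂ)) * (h.eigenvalues i) - (1/2) * (h.eigenvalues i)) * (⇑(h.eigenvectorBasis i) : n → ℂ) j = 0 := by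
      linear_combination e2
    have e4 : ((h.eigenvalues i : ℂ)) * (h.eigenvalues i) - (1/2) * (h.eigenvalues i) = 0 := by
      rcases mul_eq_zero.mp e3 with h' | h'
      · exact h'
      · exact absurd h' hj'
    have e5 : ((h.eigenvalues i * h.eigenvalues i - (1/2) * h.eigenvalues i : ℝ) : ℂ) = 0 := by
      push_cast; linear_combination e4
    have e6 : h.eigenvalues i * h.eigenvalues i - (1/2) * h.eigenvalues i = 0 := by
      exact_mod_cast e5
    rcases mul_eq_zero.mp (by linear_combination e6 : (h.eigenvalues i) * ((h.eigenvalues i) - 1/2) = 0) with h0 | h0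
    · left; exact h0
    · right; linarith
  have hsum : ∑ i, h.eigenvalues i = 1 := by
    have := trace_eq_sum_eig' h
    rw [htr] at this
    exact_mod_cast this.symm
  rw [vNEntropy, dif_pos h]
  have hterm : ∀ i, h.eigenvalues i * Real.log (h.eigenvalues i)
      = h.eigenvalues i * Real.log (1/2) := by
    intro i
    rcases key i with h0 | h0 <;> rw [h0] <;> simp
  rw [Finset.sum_congr rfl fun i _ => hterm i, ← Finset.sum_mul, hsum]
  rw [one_mul, Real.log_div one_ne_zero (by norm_num), Real.log_one]
  ring

set_option maxHeartbeats 1600000 in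

/-- For the unit vector `ψ' = (1/√2)(e₁⊗e₁⊗e₁⊗e₁ + e₀⊗e₁⊗e₁⊗e₀)`
in `(ℂ²)^{⊗4}`, the reduced density matrix on factors (1,4) is the rank-one projection onto
`(1/√2)(e₀⊗e₀ + e₁⊗e₁)`, while the reduced density matrix on factors (1,2) equals
`½(|e₁⊗e₁⟩⟨e₁⊗e₁| + |e₀⊗e₁⟩⟨e₀⊗e₁|)`, whose entropy is `log 2`. -/

theorem alternative_purification_entropy_log_two :
    (∑ p, ‖ψAlt p‖ ^ 2 = 1) ∧
    pt14 (pureState ψAlt) = pureState bellVec ∧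
    pt12 (pureState ψAlt) = (1 / 2 : ℂ) • (pureState e11 + pureState e01) ∧
    vNEntropy (pt12 (pureState ψAlt)) = Real.log 2 := by
  have h2 : ((Real.sqrt 2 : ℝ) : ℂ) ^ 2 = 2 := by
    rw [sq, ← Complex.ofReal_mul, Real.mul_self_sqrt (by norm_num)]; norm_num
  have h2' : ((1:ℝ) / Real.sqrt 2) ^ 2 = 1/2 := by
    rw [div_pow, one_pow, Real.sq_sqrt (by norm_num : (2:ℝ) ≥ 0)]
  have part1 : (∑ p, ‖ψAlt p‖ ^ 2 = 1) := by
    simp [ψAlt, stdBasis, Fintype.sum_prod_type, Fin.sum_univ_two]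
    norm_num [h2']
  have part2 : pt14 (pureState ψAlt) = pureState bellVec := by
    ext ⟨i, k⟩ ⟨i', k'⟩
    fin_cases i <;> fin_cases k <;> fin_cases i' <;> fin_cases k' <;>
      simp [pt14, pureState, ψAlt, bellVec, stdBasis, Fin.sum_univ_two] <;>
      field_simp <;> norm_num [h2] <;> linear_combination -h2
  have part3 : pt12 (pureState ψAlt) = (1 / 2 : ℂ) • (pureState e11 + pureState e01) := by
    ext ⟨i, b⟩ ⟨i', b'⟩
    fin_cases i <;> fin_cases b <;> fin_cases i' <;> fin_cases b' <;>
      simp [pt12, pureState, ψAlt, e11, e01, stdBasis, Fin.sum_univ_two] <;>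
      field_simp <;> norm_num [h2] <;> linear_combination -h2
  refine ⟨part1, part2, part3, ?_⟩
  rw [part3]
  have hherm : ((1 / 2 : ℂ) • (pureState e11 + pureState e01)).IsHermitian := by
    ext ⟨i, b⟩ ⟨i', b'⟩
    fin_cases i <;> fin_cases b <;> fin_cases i' <;> fin_cases b' <;>
      simp [pureState, e11, e01, stdBasis, Matrix.conjTranspose_apply]
  have hsq : ((1 / 2 : ℂ) • (pureState e11 + pureState e01)) * ((1 / 2 : ℂ) • (pureState e11 + pureState e01))
      = (1/2 : ℂ) • ((1 / 2 : ℂ) • (pureState e11 + pureState e01)) := by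
    ext ⟨i, b⟩ ⟨i', b'⟩
    fin_cases i <;> fin_cases b <;> fin_cases i' <;> fin_cases b' <;>
      simp [Matrix.mul_apply, Fintype.sum_prod_type, pureState, e11, e01, stdBasis, Fin.sum_univ_two] <;>
      norm_num
  have htr : ((1 / 2 : ℂ) • (pureState e11 + pureState e01)).trace = 1 := by
    simp [Matrix.trace, Matrix.diag, Fintype.sum_prod_type, Fin.sum_univ_two, pureState, e11, e01, stdBasis]
    norm_num
  exact entropy_aux' hherm hsq htr
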